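/- Let G be a d-graph with d odd. Then the combinatorial curvature K(x) = 1 - S_0(x)/2 + S_1(x)/3 - S_2(x)/4 + ... vanishes at every vertex x, where S_k(x) is the number of (k+1)-cliques in the unit sphere S(x). -/

import Mathlib

universe u

def ContractibleFuel : ℕ → ∀ {V : Type u}, SimpleGraph V → Prop
  | 0, _, _ => False
  | n + 1, V, G =>
      (Nonempty V ∧ Subsingleton V) ∨
      ∃ x : V, ContractibleFuel n (G.induce (G.neighborSet x)) ∧
        ContractibleFuel n (G.induce {y : V | y ≠ x})

def Contractible {V : Type u} (G : SimpleGraph V) : Prop :=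
  ∃ n, ContractibleFuel n G

def SphereFuel : ℕ → ℕ → ∀ {V : Type u}, SimpleGraph V → Prop
  | 0, _, _, _ => False
  | _ + 1, 0, V, _ => IsEmpty V
  | n + 1, s + 1, V, G =>
      Nonempty V ∧
      (∀ x : V, SphereFuel n s (G.induce (G.neighborSet x))) ∧
      (∀ x : V, Contractible (G.induce {y : V | y ≠ x}))

/-- `G` is a `d`-sphere in the sense of Evako (for `d ≥ -1`). -/
def IsSphere (d : ℤ) {V : Type u} (G : SimpleGraph V) : Prop :=
  -1 ≤ d ∧ ∃ n, SphereFuel n (d + 1).toNat G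

/-- A `d`-graph: a finite simple graph in which every unit sphere is a `(d-1)`-sphere. -/
def IsDGraph (d : ℕ) {V : Type u} [Fintype V] (G : SimpleGraph V) : Prop :=
  ∀ x : V, IsSphere ((d : ℤ) - 1) (G.induce (G.neighborSet x))

/-- `f` changes sign relative to `c` on the finite vertex set `S`. -/
def changesSign {V : Type u} (f : V → ℝ) (c : ℝ) (S : Finset V) : Prop :=
  (∃ v ∈ S, f v < c) ∧ (∃ v ∈ S, c < f v)

/-- The level-surface graph `{f = c}`: vertices are the simplices (cliques) of `G`
on which `f` changes sign relative to `c`; two simplices are adjacent when one is a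
proper subset of the other. -/
def levelGraph {V : Type u} (G : SimpleGraph V) (f : V → ℝ) (c : ℝ) :
    SimpleGraph {s : Finset V // G.IsClique s ∧ changesSign f c s} where
  Adj a b := a.1 ⊂ b.1 ∨ b.1 ⊂ a.1
  symm := ⟨fun a b h => h.symm⟩
  loopless := ⟨fun a h => by rcases h with h | h <;> exact ssubset_irrefl _ h⟩


open scoped Classical


open Finset Polynomial

section Lemmas
variable {V : Type u}
open Finset Polynomial

lemma isNClique_induce {G : SimpleGraph V} {s : Set V} {k : ℕ} {t : Finset s} :
    (G.induce s).IsNClique k t ↔ G.IsNClique k (t.map (Function.Embedding.subtype _)) := by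
  simp only [SimpleGraph.isNClique_iff, Finset.card_map, and_congr_left_iff]
  intro _
  constructor
  · intro h a ha b hb hab
    simp only [Finset.coe_map, Set.mem_image, Finset.mem_coe,
      Function.Embedding.coe_subtype] at ha hb
    obtain ⟨a', ha', rfl⟩ := ha
    obtain ⟨b', hb', rfl⟩ := hb
    exact h ha' hb' (fun hc => hab (by rw [hc]))
  · intro h a ha b hb hab
    have ha' : (a : V) ∈ (t.map (Function.Embedding.subtype _) : Finset V) := by
      simp only [Finset.mem_map, Function.Embedding.coe_subtype]
      exact ⟨a, ha, rfl⟩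
    have hb' : (b : V) ∈ (t.map (Function.Embedding.subtype _) : Finset V) := by
      simp only [Finset.mem_map, Function.Embedding.coe_subtype]
      exact ⟨b, hb, rfl⟩
    exact h ha' hb' (fun hc => hab (Subtype.ext hc))

lemma cc_eq_card' [Fintype V] (G : SimpleGraph V) (k : ℕ) :
    ({s : Finset V | G.IsNClique k s}).ncard
      = (Finset.univ.filter (fun s : Finset V => G.IsNClique k s)).card := by
  rw [← Set.toFinset_setOf]
  exact Set.ncard_eq_toFinset_card' _

lemma cc_induce [Fintype V] (G : SimpleGraph V) (s : Set V) (k : ℕ) :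
    ({t : Finset s | (G.induce s).IsNClique k t}).ncard
      = (Finset.univ.filter (fun u : Finset V => G.IsNClique k u ∧ ↑u ⊆ s)).card := by
  rw [cc_eq_card']
  apply Finset.card_nbij' (fun t => t.map (Function.Embedding.subtype _))
    (fun u => u.subtype (· ∈ s))
  · intro t ht
    simp only [Finset.mem_coe, Finset.mem_filter, Finset.mem_univ, true_and] at ht ⊢
    refine ⟨isNClique_induce.mp ht, ?_⟩
    intro a ha
    simp only [Finset.coe_map, Set.mem_image, Finset.mem_coe,
      Function.Embedding.coe_subtype] at ha
    obtain ⟨a', _, rfl⟩ := ha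
    exact a'.2
  · intro u hu
    simp only [Finset.mem_coe, Finset.mem_filter, Finset.mem_univ, true_and] at hu ⊢
    rw [isNClique_induce, Finset.subtype_map, Finset.filter_true_of_mem
      (fun a ha => hu.2 ha)]
    exact hu.1
  · intro t _
    ext a
    simp
  · intro u hu
    simp only [Finset.mem_coe, Finset.mem_filter, Finset.mem_univ, true_and] at hu
    show (u.subtype (· ∈ s)).map (Function.Embedding.subtype _) = u
    rw [Finset.subtype_map, Finset.filter_true_of_mem (fun a ha => hu.2 ha)]

lemma cc_nbhd [Fintype V] (G : SimpleGraph V) (x : V) (k : ℕ) :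
    ({t : Finset (G.neighborSet x) | (G.induce (G.neighborSet x)).IsNClique k t}).ncard
      = (Finset.univ.filter (fun u : Finset V => G.IsNClique (k+1) u ∧ x ∈ u)).card := by
  rw [cc_induce]
  apply Finset.card_nbij' (fun u => insert x u) (fun u => u.erase x)
  · intro u hu
    simp only [Finset.mem_coe, Finset.mem_filter, Finset.mem_univ, true_and] at hu ⊢
    have hadj : ∀ b ∈ u, G.Adj x b := fun b hb => hu.2 hb
    refine ⟨hu.1.insert hadj, Finset.mem_insert_self _ _⟩
  · intro u hu
    simp only [Finset.mem_coe, Finset.mem_filter, Finset.mem_univ, true_and] at hu ⊢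
    constructor
    · constructor
      · exact hu.1.1.subset (by simp [Finset.erase_subset])
      · rw [Finset.card_erase_of_mem hu.2, hu.1.2]
        rfl
    · intro a ha
      simp only [Finset.coe_erase, Set.mem_diff, Finset.mem_coe,
        Set.mem_singleton_iff] at ha
      exact hu.1.1 (by simp [hu.2]) (by simp [ha.1]) (Ne.symm ha.2)
  · intro u hu
    simp only [Finset.mem_coe, Finset.mem_filter, Finset.mem_univ, true_and] at hu
    have hx : x ∉ u := fun hx => G.irrefl (hu.2 hx)
    exact Finset.erase_insert hx
  · intro u hu
    simp only [Finset.mem_coe, Finset.mem_filter, Finset.mem_univ, true_and] at hu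
    exact Finset.insert_erase hu.2

lemma cc_compl [Fintype V] (G : SimpleGraph V) (x : V) (k : ℕ) :
    ({t : Finset ({y : V | y ≠ x}) | (G.induce {y : V | y ≠ x}).IsNClique k t}).ncard
      = (Finset.univ.filter (fun u : Finset V => G.IsNClique k u ∧ x ∉ u)).card := by
  rw [cc_induce]
  congr 1
  apply Finset.filter_congr
  intro u _
  constructor
  · rintro ⟨h1, h2⟩
    exact ⟨h1, fun hx => (h2 hx) rfl⟩
  · rintro ⟨h1, h2⟩
    exact ⟨h1, fun a ha hax => h2 (hax ▸ ha)⟩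

lemma cc_split [Fintype V] (G : SimpleGraph V) (x : V) (k : ℕ) :
    ({s : Finset V | G.IsNClique (k+1) s}).ncard
      = ({t : Finset ({y : V | y ≠ x}) | (G.induce {y : V | y ≠ x}).IsNClique (k+1) t}).ncard
      + ({t : Finset (G.neighborSet x) | (G.induce (G.neighborSet x)).IsNClique k t}).ncard := by
  rw [cc_eq_card', cc_compl, cc_nbhd]
  have h1 : (Finset.univ.filter (fun u : Finset V => G.IsNClique (k+1) u ∧ x ∉ u))
      = (Finset.univ.filter (fun u : Finset V => G.IsNClique (k+1) u)).filter (fun u => x ∉ u) := by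
    rw [Finset.filter_filter]
  have h2 : (Finset.univ.filter (fun u : Finset V => G.IsNClique (k+1) u ∧ x ∈ u))
      = (Finset.univ.filter (fun u : Finset V => G.IsNClique (k+1) u)).filter (fun u => x ∈ u) := by
    rw [Finset.filter_filter]
  rw [h1, h2]
  have h3 := Finset.card_filter_add_card_filter_not
    (s := Finset.univ.filter (fun u : Finset V => G.IsNClique (k+1) u))
    (fun u : Finset V => x ∈ u)
  omega

lemma sum_cc_nbhd [Fintype V] (G : SimpleGraph V) (k : ℕ) :
    ∑ x : V, ({t : Finset (G.neighborSet x) |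
        (G.induce (G.neighborSet x)).IsNClique k t}).ncard
      = (k+1) * ({s : Finset V | G.IsNClique (k+1) s}).ncard := by
  simp_rw [cc_nbhd, cc_eq_card']
  have h1 : ∀ x : V, (Finset.univ.filter (fun u : Finset V => G.IsNClique (k+1) u ∧ x ∈ u)).card
      = ∑ u ∈ Finset.univ.filter (fun u : Finset V => G.IsNClique (k+1) u),
          (if x ∈ u then 1 else 0) := by
    intro x
    rw [Finset.card_filter, Finset.sum_filter]
    congr 1
    ext u
    by_cases h : G.IsNClique (k+1) u <;> simp [h]
  simp_rw [h1]
  rw [Finset.sum_comm]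
  have h2 : ∀ u ∈ Finset.univ.filter (fun u : Finset V => G.IsNClique (k+1) u),
      (∑ x : V, if x ∈ u then 1 else 0) = k + 1 := by
    intro u hu
    simp only [Finset.mem_filter, Finset.mem_univ, true_and] at hu
    rw [Finset.sum_ite_mem, Finset.univ_inter, Finset.sum_const, smul_eq_mul, mul_one, hu.2]
  rw [Finset.sum_congr rfl h2, Finset.sum_const, smul_eq_mul, mul_comm]
open Finset Polynomial

noncomputable def cc (G : SimpleGraph V) (k : ℕ) : ℕ :=
  {s : Finset V | G.IsNClique k s}.ncard

lemma cc_eq_card [Fintype V] (G : SimpleGraph V) (k : ℕ) :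
    cc G k = (Finset.univ.filter (fun s : Finset V => G.IsNClique k s)).card := by
  rw [cc, ← Set.toFinset_setOf]
  exact Set.ncard_eq_toFinset_card' _

lemma cc_zero [Fintype V] (G : SimpleGraph V) : cc G 0 = 1 := by
  rw [cc_eq_card]
  have : (Finset.univ.filter (fun s : Finset V => G.IsNClique 0 s)) = {∅} := by
    ext s; simp [SimpleGraph.isNClique_zero]
  rw [this, Finset.card_singleton]

lemma cc_one [Fintype V] (G : SimpleGraph V) : cc G 1 = Fintype.card V := by
  rw [cc_eq_card]
  have : (Finset.univ.filter (fun s : Finset V => G.IsNClique 1 s))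
      = Finset.univ.image (fun a : V => ({a} : Finset V)) := by
    ext s
    simp [SimpleGraph.isNClique_one, eq_comm]
  rw [this, Finset.card_image_of_injective _ (fun a b h => by simpa using h),
    Finset.card_univ]

lemma cc_of_card_lt [Fintype V] (G : SimpleGraph V) {k : ℕ} (hk : Fintype.card V < k) :
    cc G k = 0 := by
  rw [cc_eq_card, Finset.card_eq_zero]
  ext s
  simp only [Finset.mem_filter, Finset.mem_univ, true_and, Finset.notMem_empty, iff_false]
  intro hs
  exact absurd (hs.2 ▸ Finset.card_le_univ s) (by omega)

/-- the clique polynomial -/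
noncomputable def fp [Fintype V] (G : SimpleGraph V) : ℚ[X] :=
  ∑ k ∈ Finset.range (Fintype.card V + 1), C ((cc G k : ℚ)) * X ^ k

lemma fp_coeff [Fintype V] (G : SimpleGraph V) (n : ℕ) :
    (fp G).coeff n = (cc G n : ℚ) := by
  rw [fp, finset_sum_coeff]
  simp only [coeff_C_mul, coeff_X_pow, mul_ite, mul_one, mul_zero]
  rw [Finset.sum_ite_eq (Finset.range (Fintype.card V + 1)) n (fun k => (cc G k : ℚ))]
  by_cases h : n ∈ Finset.range (Fintype.card V + 1)
  · rw [if_pos h]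
  · rw [if_neg h, cc_of_card_lt]
    · simp
    · simp only [Finset.mem_range] at h; omega

lemma fp_eval_zero [Fintype V] (G : SimpleGraph V) : (fp G).eval 0 = 1 := by
  rw [← coeff_zero_eq_eval_zero, fp_coeff, cc_zero, Nat.cast_one]
lemma fp_split [Fintype V] (G : SimpleGraph V) (x : V) :
    fp G = fp (G.induce {y : V | y ≠ x}) + X * fp (G.induce (G.neighborSet x)) := by
  ext n
  rw [coeff_add, fp_coeff]
  cases n with
  | zero =>
    rw [fp_coeff, mul_coeff_zero]
    simp [cc_zero]
  | succ n =>
    rw [coeff_X_mul, fp_coeff, fp_coeff]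
    rw [cc, cc, cc]
    exact_mod_cast congrArg (Nat.cast : ℕ → ℚ) (cc_split G x n)

lemma fp_deriv [Fintype V] (G : SimpleGraph V) :
    derivative (fp G) = ∑ x : V, fp (G.induce (G.neighborSet x)) := by
  ext n
  rw [coeff_derivative, fp_coeff, finset_sum_coeff]
  simp_rw [fp_coeff]
  have h := sum_cc_nbhd G n
  have h' : (∑ x : V, (cc (G.induce (G.neighborSet x)) n : ℚ))
      = ((n+1 : ℕ) : ℚ) * (cc G (n+1) : ℚ) := by
    simp only [cc]
    exact_mod_cast congrArg (Nat.cast : ℕ → ℚ) h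
  rw [h']
  push_cast
  ring

lemma contractible_eval :
    ∀ (n : ℕ) {V : Type u} [Fintype V] (G : SimpleGraph V),
      ContractibleFuel n G → (fp G).eval (-1) = 0 := by
  intro n
  induction n with
  | zero => intro V _ G h; exact absurd h id
  | succ n ih =>
    intro V _ G h
    rcases h with ⟨hne, hss⟩ | ⟨x, h1, h2⟩
    · have hcard : Fintype.card V = 1 := by
        refine le_antisymm (Fintype.card_le_one_iff_subsingleton.mpr hss) ?_
        exact Fintype.card_pos_iff.mpr hne
      rw [fp, hcard]
      rw [eval_finset_sum]
      rw [Finset.sum_range_succ, Finset.sum_range_one]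
      simp [cc_zero, cc_one, hcard]
    · have e1 := ih _ h1
      have e2 := ih _ h2
      rw [fp_split G x]
      simp only [eval_add, eval_mul, eval_X, e1, e2]
      ring

lemma sphere_eval :
    ∀ (n m : ℕ) {V : Type u} [Fintype V] (G : SimpleGraph V),
      SphereFuel n m G → (fp G).eval (-1) = (-1 : ℚ) ^ m := by
  intro n
  induction n with
  | zero => intro m V _ G h; exact absurd h id
  | succ n ih =>
    intro m V _ G h
    match m, h with
    | 0, h =>
      have : IsEmpty V := h
      have hcard : Fintype.card V = 0 := Fintype.card_eq_zero
      rw [fp, hcard]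
      simp [cc_zero]
    | m + 1, ⟨hne, hsph, hcon⟩ =>
      obtain ⟨x⟩ := hne
      obtain ⟨nc, hc⟩ := hcon x
      have e1 := contractible_eval nc _ hc
      have e2 := ih m _ (hsph x)
      rw [fp_split G x]
      simp only [eval_add, eval_mul, eval_X, e1, e2]
      ring

lemma sphere_small :
    ∀ (n m : ℕ) {V : Type u} [Fintype V] (G : SimpleGraph V),
      SphereFuel n m G → ∀ k, m < k → cc G k = 0 := by
  intro n
  induction n with
  | zero => intro m V _ G h; exact absurd h id
  | succ n ih =>
    intro m V _ G h k hk
    match m, h with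
    | 0, h =>
      have hE : IsEmpty V := h
      rw [cc_eq_card, Finset.card_eq_zero]
      ext u
      simp only [Finset.mem_filter, Finset.mem_univ, true_and, Finset.notMem_empty, iff_false]
      intro hu
      have hc : u.card = k := hu.2
      have hne : u.Nonempty := by rw [← Finset.card_pos, hc]; omega
      obtain ⟨y, -⟩ := hne
      exact hE.false y
    | m + 1, ⟨hne, hsph, hcon⟩ =>
      rw [cc_eq_card, Finset.card_eq_zero]
      ext u
      simp only [Finset.mem_filter, Finset.mem_univ, true_and, Finset.notMem_empty, iff_false]
      intro hu
      have hcard : u.card = k := hu.2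
      have hune : u.Nonempty := by rw [← Finset.card_pos, hcard]; omega
      obtain ⟨x, hx⟩ := hune
      obtain ⟨k', rfl⟩ : ∃ k', k = k' + 1 := ⟨k - 1, by omega⟩
      have h0 : cc (G.induce (G.neighborSet x)) k' = 0 := ih m _ (hsph x) k' (by omega)
      rw [cc, cc_nbhd, Finset.card_eq_zero] at h0
      have : u ∈ Finset.univ.filter
          (fun u : Finset V => G.IsNClique (k' + 1) u ∧ x ∈ u) := by
        simp only [Finset.mem_filter, Finset.mem_univ, true_and]
        exact ⟨hu, hx⟩
      rw [h0] at this
      exact absurd this (Finset.notMem_empty u)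

lemma sphere_DS :
    ∀ (n m : ℕ) {V : Type u} [Fintype V] (G : SimpleGraph V),
      SphereFuel n m G →
        (fp G).comp (C (-1) - X) = C ((-1 : ℚ) ^ m) * fp G := by
  intro n
  induction n with
  | zero => intro m V _ G h; exact absurd h id
  | succ n ih =>
    intro m V _ G h
    match m, h with
    | 0, h =>
      have hE : IsEmpty V := h
      have hcard : Fintype.card V = 0 := Fintype.card_eq_zero
      have hfp : fp G = C 1 := by
        rw [fp, hcard, Finset.sum_range_one]
        simp [cc_zero]
      rw [hfp]
      simp
    | m + 1, ⟨hne, hsph, hcon⟩ =>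
      have hqd : derivative (C (-1) - X : ℚ[X]) = -1 := by
        simp
      have hD0 : derivative ((fp G).comp (C (-1) - X)
          - C ((-1:ℚ)^(m+1)) * fp G) = 0 := by
        rw [derivative_sub, derivative_comp, hqd, derivative_C_mul]
        rw [fp_deriv G, Polynomial.sum_comp]
        rw [Finset.sum_congr rfl (fun x _ => ih m _ (hsph x))]
        rw [← Finset.mul_sum]
        rw [pow_succ, C_mul]
        simp only [C_neg, C_1]
        ring
      have hC := eq_C_of_derivative_eq_zero hD0
      have heval : ((fp G).comp (C (-1) - X)
          - C ((-1:ℚ)^(m+1)) * fp G).eval (-1) = 0 := by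
        rw [eval_sub, eval_comp, eval_mul, eval_C]
        have h1 : (C (-1) - X : ℚ[X]).eval (-1) = 0 := by simp
        rw [h1, fp_eval_zero, sphere_eval (n+1) (m+1) G ⟨hne, hsph, hcon⟩]
        rw [← mul_pow, neg_mul_neg, one_mul, one_pow]
        ring
      rw [hC, eval_C] at heval
      rw [heval, map_zero] at hC
      have := sub_eq_zero.mp hC
      linear_combination this

/-- antiderivative -/
noncomputable def ap (p : ℚ[X]) : ℚ[X] :=
  ∑ k ∈ Finset.range (p.natDegree + 1), C (p.coeff k / (k+1)) * X^(k+1)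

lemma ap_deriv (p : ℚ[X]) : derivative (ap p) = p := by
  rw [ap, derivative_sum]
  have h : ∀ k ∈ Finset.range (p.natDegree + 1),
      derivative (C (p.coeff k / (k+1)) * X^(k+1)) = C (p.coeff k) * X^k := by
    intro k _
    rw [derivative_C_mul_X_pow]
    have h1 : ((k : ℚ) + 1) ≠ 0 := by positivity
    have h2 : p.coeff k / ((k : ℚ)+1) * ((k+1 : ℕ) : ℚ) = p.coeff k := by
      push_cast
      field_simp
    simp only [Nat.add_sub_cancel]
    rw [h2]
  rw [Finset.sum_congr rfl h]
  conv_rhs => rw [as_sum_range' p (p.natDegree + 1) (lt_add_one _)]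
  simp [C_mul_X_pow_eq_monomial]

lemma ap_eval_zero (p : ℚ[X]) : (ap p).eval 0 = 0 := by
  rw [ap, eval_finset_sum]
  apply Finset.sum_eq_zero
  intro k _
  simp

lemma ap_eval_neg_one (p : ℚ[X]) (hp : p.comp (C (-1) - X) = C (-1) * p) :
    (ap p).eval (-1) = 0 := by
  have hqd : derivative (C (-1) - X : ℚ[X]) = -1 := by simp
  have hB0 : derivative ((ap p).comp (C (-1) - X) - ap p) = 0 := by
    rw [derivative_sub, derivative_comp, hqd, ap_deriv, hp]
    simp only [C_neg, C_1]
    ring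
  have hC := eq_C_of_derivative_eq_zero hB0
  have e0 : ((ap p).comp (C (-1) - X) - ap p).eval 0 = (ap p).eval (-1) := by
    rw [eval_sub, eval_comp]
    simp [ap_eval_zero]
  have e1 : ((ap p).comp (C (-1) - X) - ap p).eval (-1) = -((ap p).eval (-1)) := by
    rw [eval_sub, eval_comp]
    have : (C (-1) - X : ℚ[X]).eval (-1) = 0 := by simp
    rw [this, ap_eval_zero]
    ring
  rw [hC, eval_C] at e0 e1
  linarith

lemma ap_eval_neg_one_eq (p : ℚ[X]) :
    (ap p).eval (-1)
      = ∑ k ∈ Finset.range (p.natDegree + 1), p.coeff k / (k+1) * (-1)^(k+1) := by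
  rw [ap, eval_finset_sum]
  simp

end Lemmas

/-- For `G` a `d`-graph with `d` odd, the combinatorial curvature
`K(x) = 1 - S_0(x)/2 + S_1(x)/3 - S_2(x)/4 + ⋯` vanishes at every vertex `x`,
where `S_k(x)` is the number of `(k+1)`-cliques in the unit sphere `S(x)`. -/
theorem stmt10 {V : Type u} [Fintype V] (G : SimpleGraph V) (d : ℕ)
    (hd : Odd d) (hG : IsDGraph d G) :
    ∀ x : V,
      1 + ∑ k ∈ Finset.range d, (-1 : ℚ) ^ (k + 1) *
        (({s : Finset {y : V // G.Adj x y} |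
            (G.induce (G.neighborSet x)).IsNClique (k + 1) s}.ncard : ℚ) / (k + 2))
      = 0 := by
  intro x
  show (1 : ℚ) + ∑ k ∈ Finset.range d, (-1 : ℚ) ^ (k + 1) *
      ((cc (G.induce (G.neighborSet x)) (k+1) : ℚ) / (k + 2)) = 0
  set H := G.induce (G.neighborSet x) with hH
  obtain ⟨-, n, hsf⟩ := hG x
  have hd1 : ((d : ℤ) - 1 + 1).toNat = d := by omega
  rw [hd1] at hsf
  have hDS : (fp H).comp (C (-1) - X) = C (-1) * fp H := by
    have h := sphere_DS n d H hsf
    rwa [Odd.neg_one_pow hd] at h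
  have hzero := ap_eval_neg_one (fp H) hDS
  rw [ap_eval_neg_one_eq] at hzero
  set N := (fp H).natDegree with hN
  set h : ℕ → ℚ := fun k => ((cc H k : ℚ)) / (k+1) * (-1)^(k+1) with hh
  have hzero' : ∑ k ∈ Finset.range (N + 1), h k = 0 := by
    rw [← hzero]
    apply Finset.sum_congr rfl
    intro k _
    rw [hh, fp_coeff]
  have hvan : ∀ j, d < j ∨ N < j → h j = 0 := by
    intro j hj
    have hcc0 : cc H j = 0 := by
      rcases hj with hj | hj
      · exact sphere_small n d H hsf j hj
      · have h2 := Polynomial.coeff_eq_zero_of_natDegree_lt (p := fp H) (n := j) hj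
        rw [fp_coeff] at h2
        exact_mod_cast h2
    rw [hh]
    simp [hcc0]
  have hsum0 : ∑ k ∈ Finset.range (d + 1), h k = 0 := by
    have e1 : ∑ k ∈ Finset.range (d + 1), h k
        = ∑ k ∈ Finset.range (max d N + 1), h k := by
      apply Finset.sum_subset
      · exact Finset.range_subset_range.mpr (by omega)
      · intro j hj hj2
        simp only [Finset.mem_range] at hj hj2
        exact hvan j (Or.inl (by omega))
    have e2 : ∑ k ∈ Finset.range (N + 1), h k
        = ∑ k ∈ Finset.range (max d N + 1), h k := by
      apply Finset.sum_subset
      · exact Finset.range_subset_range.mpr (by omega)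
      · intro j hj hj2
        simp only [Finset.mem_range] at hj hj2
        exact hvan j (Or.inr (by omega))
    rw [e1, ← e2, hzero']
  have hgoal : (1 : ℚ) + ∑ k ∈ Finset.range d, (-1 : ℚ) ^ (k + 1) *
        ((cc H (k+1) : ℚ) / (k + 2))
      = ∑ k ∈ Finset.range (d + 1), -h k := by
    rw [Finset.sum_range_succ' (fun k => -h k) d, add_comm]
    congr 1
    · apply Finset.sum_congr rfl
      intro k _
      rw [hh]
      push_cast
      ring
    · rw [hh]
      simp [cc_zero]
  rw [hgoal, Finset.sum_neg_distrib, hsum0, neg_zero]
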